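/- (Forbidden quadruples) Let C be a cap in (Z/2Z)^n with affinely independent subset B of size 8 and dependent set {x₁, x₂, x₃, x₄} with x_i = Σ B_i and |B_i| = 5 for each i. Then it is impossible that |B_i ∩ B_j| = 3 for all six pairs {i,j}. -/

import Mathlib

/-- A cap: a subset of (Z/2Z)^n containing no quad (four distinct vectors summing to zero). -/
def IsCap {n : ℕ} (C : Set (Fin n → ZMod 2)) : Prop :=
  ∀ a ∈ C, ∀ b ∈ C, ∀ c ∈ C, ∀ d ∈ C,
    a ≠ b → a ≠ c → a ≠ d → b ≠ c → b ≠ d → c ≠ d → a + b + c + d ≠ 0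

/-- Affine independence: no element is the sum of an odd number of other elements. -/
def AffIndep {n : ℕ} (B : Finset (Fin n → ZMod 2)) : Prop :=
  ∀ b ∈ B, ∀ T ⊆ B.erase b, Odd T.card → b ≠ ∑ v ∈ T, v


lemma pi_add_self {n : ℕ} (x : Fin n → ZMod 2) : x + x = 0 := by
  funext i
  have h : ∀ a : ZMod 2, a + a = 0 := by decide
  exact h (x i)

lemma key_add {n : ℕ} (x y z : Fin n → ZMod 2) : (x + z) + (y + z) = x + y := by
  rw [show (x + z) + (y + z) = x + y + (z + z) by ring, pi_add_self, add_zero]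

lemma sum_symmDiff' {n : ℕ} (A B : Finset (Fin n → ZMod 2)) :
    ∑ v ∈ symmDiff A B, v = (∑ v ∈ A, v) + ∑ v ∈ B, v := by
  have hA : (∑ v ∈ A \ B, v) + ∑ v ∈ A ∩ B, v = ∑ v ∈ A, v := by
    rw [← Finset.sdiff_inter_self_left A B]
    exact Finset.sum_sdiff Finset.inter_subset_left
  have hB : (∑ v ∈ B \ A, v) + ∑ v ∈ A ∩ B, v = ∑ v ∈ B, v := by
    rw [Finset.inter_comm, ← Finset.sdiff_inter_self_left B A]
    exact Finset.sum_sdiff Finset.inter_subset_left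
  rw [symmDiff_def, Finset.sup_eq_union, Finset.sum_union disjoint_sdiff_sdiff, ← hA, ← hB]
  exact (key_add _ _ _).symm

lemma card_symmDiff2 {X : Type} [DecidableEq X] (A B : Finset X) :
    (symmDiff A B).card + 2 * (A ∩ B).card = A.card + B.card := by
  have hA : (A \ B).card + (A ∩ B).card = A.card := Finset.card_sdiff_add_card_inter A B
  have hB : (B \ A).card + (A ∩ B).card = B.card := by
    rw [Finset.inter_comm]; exact Finset.card_sdiff_add_card_inter B A
  have hd : (symmDiff A B).card = (A \ B).card + (B \ A).card := by
    rw [symmDiff_def, Finset.sup_eq_union]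
    exact Finset.card_union_of_disjoint disjoint_sdiff_sdiff
  omega

lemma inter_symmDiff_right' {X : Type} [DecidableEq X] (A B C : Finset X) :
    (symmDiff A B) ∩ C = symmDiff (A ∩ C) (B ∩ C) := by
  ext x
  simp only [Finset.mem_inter, Finset.mem_symmDiff]
  tauto

lemma card_symmDiff3 {X : Type} [DecidableEq X] (A B C : Finset X) :
    (symmDiff (symmDiff A B) C).card + 2 * ((A ∩ B).card + (A ∩ C).card + (B ∩ C).card)
      = A.card + B.card + C.card + 4 * (A ∩ B ∩ C).card := by
  have h1 := card_symmDiff2 (symmDiff A B) C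
  have h2 := card_symmDiff2 A B
  have h4 := card_symmDiff2 (A ∩ C) (B ∩ C)
  have h5 : (A ∩ C) ∩ (B ∩ C) = A ∩ B ∩ C := by
    ext x; simp only [Finset.mem_inter]; tauto
  rw [inter_symmDiff_right'] at h1
  rw [h5] at h4
  omega

lemma triple_inter_card {n : ℕ} (C : Set (Fin n → ZMod 2)) (hC : IsCap C)
    (B A₁ A₂ A₃ : Finset (Fin n → ZMod 2)) (hBC : ↑B ⊆ C) (hBcard : B.card = 8)
    (y₁ y₂ y₃ : Fin n → ZMod 2)
    (hy₁C : y₁ ∈ C) (hy₁B : y₁ ∉ B) (hy₂C : y₂ ∈ C) (hy₂B : y₂ ∉ B)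
    (hy₃C : y₃ ∈ C) (hy₃B : y₃ ∉ B)
    (g12 : y₁ ≠ y₂) (g13 : y₁ ≠ y₃) (g23 : y₂ ≠ y₃)
    (hs₁ : A₁ ⊆ B) (hs₂ : A₂ ⊆ B) (hs₃ : A₃ ⊆ B)
    (he₁ : y₁ = ∑ v ∈ A₁, v) (he₂ : y₂ = ∑ v ∈ A₂, v) (he₃ : y₃ = ∑ v ∈ A₃, v)
    (hc₁ : A₁.card = 5) (hc₂ : A₂.card = 5) (hc₃ : A₃.card = 5)
    (hi₁₂ : (A₁ ∩ A₂).card = 3) (hi₁₃ : (A₁ ∩ A₃).card = 3) (hi₂₃ : (A₂ ∩ A₃).card = 3) :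
    (A₁ ∩ A₂ ∩ A₃).card = 2 := by
  have hkey := card_symmDiff3 A₁ A₂ A₃
  rw [hc₁, hc₂, hc₃, hi₁₂, hi₁₃, hi₂₃] at hkey
  set S := symmDiff (symmDiff A₁ A₂) A₃ with hS
  have hSB : S ⊆ B := by
    intro x hx
    simp only [hS, Finset.mem_symmDiff] at hx
    rcases hx with ⟨hx, -⟩ | ⟨hx, -⟩
    · rcases hx with ⟨hx, -⟩ | ⟨hx, -⟩
      · exact hs₁ hx
      · exact hs₂ hx
    · exact hs₃ hx
  have hS8 : S.card ≤ 8 := hBcard ▸ Finset.card_le_card hSB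
  have ht : (A₁ ∩ A₂ ∩ A₃).card = 1 ∨ (A₁ ∩ A₂ ∩ A₃).card = 2 := by omega
  rcases ht with ht | ht
  · exfalso
    have hS1 : S.card = 1 := by omega
    obtain ⟨b, hb⟩ := Finset.card_eq_one.mp hS1
    have hbS : b ∈ S := hb ▸ Finset.mem_singleton_self b
    have hbB : b ∈ B := hSB hbS
    have hsum : y₁ + y₂ + y₃ = b := by
      rw [he₁, he₂, he₃, ← sum_symmDiff', ← sum_symmDiff', ← hS, hb, Finset.sum_singleton]
    refine hC y₁ hy₁C y₂ hy₂C y₃ hy₃C b (hBC hbB) g12 g13 ?_ g23 ?_ ?_ ?_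
    · exact fun h => hy₁B (h ▸ hbB)
    · exact fun h => hy₂B (h ▸ hbB)
    · exact fun h => hy₃B (h ▸ hbB)
    · rw [hsum]; exact pi_add_self b
  · exact ht

theorem forbidden_quadruples {n : ℕ} (C : Set (Fin n → ZMod 2))
    (hC : IsCap C) (B B₁ B₂ B₃ B₄ : Finset (Fin n → ZMod 2)) (hBC : ↑B ⊆ C)
    (hB : AffIndep B) (hBcard : B.card = 8)
    (x₁ x₂ x₃ x₄ : Fin n → ZMod 2)
    (hx₁C : x₁ ∈ C) (hx₁B : x₁ ∉ B)
    (hx₂C : x₂ ∈ C) (hx₂B : x₂ ∉ B)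
    (hx₃C : x₃ ∈ C) (hx₃B : x₃ ∉ B)
    (hx₄C : x₄ ∈ C) (hx₄B : x₄ ∉ B)
    (h12 : x₁ ≠ x₂) (h13 : x₁ ≠ x₃) (h14 : x₁ ≠ x₄)
    (h23 : x₂ ≠ x₃) (h24 : x₂ ≠ x₄) (h34 : x₃ ≠ x₄)
    (hs₁ : B₁ ⊆ B) (hs₂ : B₂ ⊆ B) (hs₃ : B₃ ⊆ B) (hs₄ : B₄ ⊆ B)
    (he₁ : x₁ = ∑ v ∈ B₁, v) (he₂ : x₂ = ∑ v ∈ B₂, v)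
    (he₃ : x₃ = ∑ v ∈ B₃, v) (he₄ : x₄ = ∑ v ∈ B₄, v)
    (hc₁ : B₁.card = 5) (hc₂ : B₂.card = 5) (hc₃ : B₃.card = 5) (hc₄ : B₄.card = 5) :
    ¬((B₁ ∩ B₂).card = 3 ∧ (B₁ ∩ B₃).card = 3 ∧ (B₁ ∩ B₄).card = 3 ∧
      (B₂ ∩ B₃).card = 3 ∧ (B₂ ∩ B₄).card = 3 ∧ (B₃ ∩ B₄).card = 3) := by
  rintro ⟨i12, i13, i14, i23, i24, i34⟩
  have t123 : (B₁ ∩ B₂ ∩ B₃).card = 2 :=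
    triple_inter_card C hC B B₁ B₂ B₃ hBC hBcard x₁ x₂ x₃ hx₁C hx₁B hx₂C hx₂B hx₃C hx₃B
      h12 h13 h23 hs₁ hs₂ hs₃ he₁ he₂ he₃ hc₁ hc₂ hc₃ i12 i13 i23
  have t124 : (B₁ ∩ B₂ ∩ B₄).card = 2 :=
    triple_inter_card C hC B B₁ B₂ B₄ hBC hBcard x₁ x₂ x₄ hx₁C hx₁B hx₂C hx₂B hx₄C hx₄B
      h12 h14 h24 hs₁ hs₂ hs₄ he₁ he₂ he₄ hc₁ hc₂ hc₄ i12 i14 i24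
  have t134 : (B₁ ∩ B₃ ∩ B₄).card = 2 :=
    triple_inter_card C hC B B₁ B₃ B₄ hBC hBcard x₁ x₃ x₄ hx₁C hx₁B hx₃C hx₃B hx₄C hx₄B
      h13 h14 h34 hs₁ hs₃ hs₄ he₁ he₃ he₄ hc₁ hc₃ hc₄ i13 i14 i34
  have t234 : (B₂ ∩ B₃ ∩ B₄).card = 2 :=
    triple_inter_card C hC B B₂ B₃ B₄ hBC hBcard x₂ x₃ x₄ hx₂C hx₂B hx₃C hx₃B hx₄C hx₄B
      h23 h24 h34 hs₂ hs₃ hs₄ he₂ he₃ he₄ hc₂ hc₃ hc₄ i23 i24 i34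
  -- inclusion–exclusion for the fourfold symmetric difference
  have hE := card_symmDiff3 B₁ B₂ B₃
  rw [hc₁, hc₂, hc₃, i12, i13, i23, t123] at hE
  have hS2 := card_symmDiff2 (symmDiff (symmDiff B₁ B₂) B₃) B₄
  have hEB : (symmDiff (symmDiff B₁ B₂) B₃) ∩ B₄
      = symmDiff (symmDiff (B₁ ∩ B₄) (B₂ ∩ B₄)) (B₃ ∩ B₄) := by
    rw [inter_symmDiff_right', inter_symmDiff_right']
  have hF := card_symmDiff3 (B₁ ∩ B₄) (B₂ ∩ B₄) (B₃ ∩ B₄)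
  have e1 : (B₁ ∩ B₄) ∩ (B₂ ∩ B₄) = B₁ ∩ B₂ ∩ B₄ := by
    ext x; simp only [Finset.mem_inter]; tauto
  have e2 : (B₁ ∩ B₄) ∩ (B₃ ∩ B₄) = B₁ ∩ B₃ ∩ B₄ := by
    ext x; simp only [Finset.mem_inter]; tauto
  have e3 : (B₂ ∩ B₄) ∩ (B₃ ∩ B₄) = B₂ ∩ B₃ ∩ B₄ := by
    ext x; simp only [Finset.mem_inter]; tauto
  have e4 : (B₁ ∩ B₄) ∩ (B₂ ∩ B₄) ∩ (B₃ ∩ B₄) = B₁ ∩ B₂ ∩ B₃ ∩ B₄ := by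
    ext x; simp only [Finset.mem_inter]; tauto
  rw [e4, e1, e2, e3, i14, i24, i34, t124, t134, t234] at hF
  rw [hEB, hc₄] at hS2
  set S := symmDiff (symmDiff (symmDiff B₁ B₂) B₃) B₄ with hS
  have hSB : S ⊆ B := by
    intro x hx
    simp only [hS, Finset.mem_symmDiff] at hx
    rcases hx with ⟨hx, -⟩ | ⟨hx, -⟩
    · rcases hx with ⟨hx, -⟩ | ⟨hx, -⟩
      · rcases hx with ⟨hx, -⟩ | ⟨hx, -⟩
        · exact hs₁ hx
        · exact hs₂ hx
      · exact hs₃ hx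
    · exact hs₄ hx
  have hS8 : S.card ≤ 8 := hBcard ▸ Finset.card_le_card hSB
  -- hE : E.card = 5 ; hS2 : S.card + 2*F.card = E.card + 5 ; hF : F.card + 12 = 9 + 4q
  have hq : (B₁ ∩ B₂ ∩ B₃ ∩ B₄).card = 1 ∨ (B₁ ∩ B₂ ∩ B₃ ∩ B₄).card = 2 := by omega
  rcases hq with hq | hq
  · -- q = 1 : S = B, but an element of the quadruple intersection is not in S
    have hScard : S.card = 8 := by omega
    have hSeqB : S = B := Finset.eq_of_subset_of_card_le hSB (by omega)
    obtain ⟨x, hx⟩ := Finset.card_pos.mp (by omega :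
      0 < (B₁ ∩ B₂ ∩ B₃ ∩ B₄).card)
    simp only [Finset.mem_inter] at hx
    obtain ⟨⟨⟨hx1, hx2⟩, hx3⟩, hx4⟩ := hx
    have hxB : x ∈ B := hs₁ hx1
    have hxS : x ∈ S := hSeqB ▸ hxB
    simp only [hS, Finset.mem_symmDiff, hx1, hx2, hx3, hx4] at hxS
    tauto
  · -- q = 2 : S = ∅, so x₁+x₂+x₃+x₄ = 0, contradicting the cap property
    have hScard : S.card = 0 := by omega
    have hSempty : S = ∅ := Finset.card_eq_zero.mp hScard
    have hsum : x₁ + x₂ + x₃ + x₄ = 0 := by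
      rw [he₁, he₂, he₃, he₄, ← sum_symmDiff', ← sum_symmDiff', ← sum_symmDiff', ← hS,
        hSempty, Finset.sum_empty]
    exact hC x₁ hx₁C x₂ hx₂C x₃ hx₃C x₄ hx₄C h12 h13 h14 h23 h24 h34 hsum
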